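/- Let C be a finite set of m parties, c_1 ∈ C, S ⊆ C∖{c_1} with |S| = ℓ, and let k_1 be an integer with 0 ≤ k_1 ≤ m−1 and ℓ ≤ m−1−k_1. For an integer v, there exists a linear order O on C with pos(O,c_1) = m−k_1 and every member of S ranked above c_1 such that Borda(O,S) = v, if and only if ℓ·k_1 + ℓ(ℓ+1)/2 ≤ v ≤ ℓ·m − ℓ(ℓ+1)/2. -/

import Mathlib

open Finset

namespace Stmt5

/-- The Borda score of party `c` under the linear order `O`:
`Borda(O,c) = m − pos(O,c)`, where `pos(O,c) = (O c).val + 1`. -/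
def borda {C : Type*} [Fintype C] (O : C ≃ Fin (Fintype.card C)) (c : C) : ℕ :=
  Fintype.card C - 1 - (O c).val

/-- The total Borda score of a set `S` of parties. -/
def bordaSum {C : Type*} [Fintype C] (O : C ≃ Fin (Fintype.card C)) (S : Finset C) : ℕ :=
  ∑ c ∈ S, borda O c



/-- Sum of `n` distinct naturals is at least `0+1+...+(n-1)`. -/
lemma sum_range_card_le (T : Finset ℕ) : ∑ i ∈ range T.card, i ≤ ∑ x ∈ T, x := by
  generalize hn : T.card = n
  induction n generalizing T with
  | zero => simp
  | succ n ih =>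
    have hne : T.Nonempty := by
      rw [← Finset.card_pos, hn]; omega
    set M := T.max' hne with hM
    have hMT : M ∈ T := T.max'_mem hne
    have hsub : T ⊆ range (M + 1) := by
      intro x hx
      simp only [mem_range]
      exact Nat.lt_succ_of_le (T.le_max' x hx)
    have hMn : n ≤ M := by
      have := Finset.card_le_card hsub
      rw [hn, card_range] at this
      omega
    have hcard : (T.erase M).card = n := by
      rw [Finset.card_erase_of_mem hMT, hn]; omega
    have hIH := ih (T.erase M) hcard
    have hsum : ∑ x ∈ T.erase M, x + M = ∑ x ∈ T, x :=
      Finset.sum_erase_add T _ hMT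
    rw [Finset.sum_range_succ]
    omega

/-- Reflection: upper bound for sums of distinct naturals below `d`. -/
lemma sum_le_of_subset_range {T : Finset ℕ} {d : ℕ} (h : T ⊆ range d) :
    ∑ x ∈ T, x + ∑ i ∈ range T.card, i + T.card ≤ T.card * d := by
  rcases Nat.eq_zero_or_pos d with hd | hd
  · subst hd
    have : T = ∅ := by
      rw [Finset.range_zero] at h
      exact Finset.subset_empty.mp h
    subst this; simp
  · have hlt : ∀ x ∈ T, x < d := fun x hx => mem_range.mp (h hx)
    set T' := T.image (fun x => d - 1 - x) with hT'
    have hinj : ∀ x ∈ T, ∀ y ∈ T, d - 1 - x = d - 1 - y → x = y := by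
      intro x hx y hy hxy
      have := hlt x hx; have := hlt y hy
      omega
    have hcard' : T'.card = T.card := Finset.card_image_of_injOn hinj
    have hsum' : ∑ y ∈ T', y = ∑ x ∈ T, (d - 1 - x) :=
      Finset.sum_image hinj
    have hpair : ∑ x ∈ T, (d - 1 - x) + ∑ x ∈ T, x = T.card * (d - 1) := by
      rw [← Finset.sum_add_distrib]
      have : ∀ x ∈ T, (d - 1 - x) + x = d - 1 := by
        intro x hx; have := hlt x hx; omega
      rw [Finset.sum_congr rfl this, Finset.sum_const, smul_eq_mul]
    have hlow := sum_range_card_le T'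
    rw [hcard', hsum'] at hlow
    have hmul : T.card * (d - 1) + T.card = T.card * d := by
      have : d - 1 + 1 = d := by omega
      calc T.card * (d-1) + T.card = T.card * (d - 1 + 1) := by ring
        _ = T.card * d := by rw [this]
    omega

/-- Any value between the min and max subset sums is attained by an `ℓ`-subset of `range (ℓ+e)`. -/
lemma exists_subset_sum (e : ℕ) : ∀ ℓ s : ℕ, (∑ i ∈ range ℓ, i) ≤ s →
    s ≤ ∑ i ∈ range ℓ, (e + i) →
    ∃ T ⊆ range (ℓ + e), T.card = ℓ ∧ ∑ x ∈ T, x = s := by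
  intro ℓ
  induction ℓ with
  | zero =>
    intro s h1 h2
    simp only [range_zero, sum_empty, Nat.le_zero] at h2
    exact ⟨∅, by simp, by simp, by simp [h2]⟩
  | succ ℓ ih =>
    intro s h1 h2
    rw [Finset.sum_range_succ] at h1 h2
    by_cases hc : s ≤ (∑ i ∈ range ℓ, i) + ℓ + e
    · refine ⟨insert (s - ∑ i ∈ range ℓ, i) (range ℓ), ?_, ?_, ?_⟩
      · intro x hx
        rcases Finset.mem_insert.mp hx with hx | hx
        · subst hx; rw [mem_range]; omega
        · rw [mem_range] at hx ⊢; omega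
      · rw [Finset.card_insert_of_notMem (by rw [mem_range]; omega), card_range]
      · rw [Finset.sum_insert (by rw [mem_range]; omega), Finset.sum_range_id]
        have := Finset.sum_range_id ℓ
        omega
    · obtain ⟨T', hT'sub, hT'card, hT'sum⟩ := ih (s - (ℓ + e)) (by omega) (by omega)
      have hnotmem : ℓ + e ∉ T' := fun hmem => by
        have := mem_range.mp (hT'sub hmem); omega
      refine ⟨insert (ℓ + e) T', ?_, ?_, ?_⟩
      · intro x hx
        rcases Finset.mem_insert.mp hx with hx | hx
        · subst hx; rw [mem_range]; omega
        · have := mem_range.mp (hT'sub hx); rw [mem_range]; omega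
      · rw [Finset.card_insert_of_notMem hnotmem, hT'card]
      · rw [Finset.sum_insert hnotmem, hT'sum]; omega



/-- Any bijection between finsets of equal-card fintypes extends to a global equivalence. -/
lemma extend_equiv {α β : Type*} [Fintype α] [Fintype β] [DecidableEq α] [DecidableEq β]
    (A : Finset α) (B : Finset β) (hcards : Fintype.card α = Fintype.card β)
    (e : {x // x ∈ A} ≃ {y // y ∈ B}) :
    ∃ O : α ≃ β, ∀ a (ha : a ∈ A), O a = (e ⟨a, ha⟩ : β) := by
  have hAB : Fintype.card {x // x ∈ A} = Fintype.card {y // y ∈ B} := Fintype.card_congr e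
  have eOut : {x // ¬ x ∈ A} ≃ {y // ¬ y ∈ B} := Fintype.equivOfCardEq (by
    rw [Fintype.card_subtype_compl, Fintype.card_subtype_compl, hAB, hcards])
  refine ⟨(Equiv.sumCompl (· ∈ A)).symm.trans ((e.sumCongr eOut).trans (Equiv.sumCompl (· ∈ B))),
    fun a ha => ?_⟩
  simp only [Equiv.trans_apply, Equiv.sumCompl_symm_apply_of_pos ha,
    Equiv.sumCongr_apply, Sum.map_inl, Equiv.sumCompl_apply_inl]

lemma aux1 {d t1 t2 : ℕ} (h1 : t1 < d) (h2 : t2 < d) (h : d - 1 - t1 = d - 1 - t2) : t1 = t2 := by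
  omega

lemma aux2 {d t : ℕ} (h : t < d) : d - 1 - t < d := by omega

lemma aux3 {m k1 : ℕ} (h0 : 0 < m) (h1 : k1 ≤ m - 1) : (m - 1 - k1) + 1 = m - k1 := by omega

lemma aux4 {m k1 t : ℕ} (h0 : 0 < m) (h1 : k1 ≤ m - 1) (ht : t < m - 1 - k1) :
    m - 1 - ((m - 1 - k1) - 1 - t) = k1 + 1 + t := by omega


/-- with `pos(O,c₁) = m − k₁` and all of `S` (of size `ℓ ≤ m−1−k₁`) above `c₁`,
the attainable values of `Borda(O,S)` are exactly the integers in
`[ℓ·k₁ + ℓ(ℓ+1)/2, ℓ·m − ℓ(ℓ+1)/2]`. -/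
theorem stmt_5 {C : Type*} [Fintype C] [DecidableEq C] (c1 : C) (S : Finset C)
    (hc1S : c1 ∉ S) (ℓ k1 : ℕ) (hS : S.card = ℓ)
    (hk1 : k1 ≤ Fintype.card C - 1) (hl : ℓ ≤ Fintype.card C - 1 - k1) (v : ℤ) :
    (∃ O : C ≃ Fin (Fintype.card C),
        (O c1).val + 1 = Fintype.card C - k1 ∧
        (∀ c ∈ S, O c < O c1) ∧
        (bordaSum O S : ℤ) = v) ↔
      ((ℓ : ℤ) * (k1 : ℤ) + ((ℓ : ℤ) * ((ℓ : ℤ) + 1)) / 2 ≤ v ∧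
        v ≤ (ℓ : ℤ) * (Fintype.card C : ℤ) - ((ℓ : ℤ) * ((ℓ : ℤ) + 1)) / 2) := by
  have hm : 0 < Fintype.card C := Fintype.card_pos_iff.mpr ⟨c1⟩
  set m := Fintype.card C with hmdef
  set d := m - 1 - k1 with hddef
  have hd : d < m := by omega
  have hld : ℓ ≤ d := hl
  set σ := ∑ i ∈ range ℓ, i with hσdef
  have hσ2 : σ * 2 = ℓ * (ℓ - 1) := Finset.sum_range_id_mul_two ℓ
  have hσℓ : 2 * σ + ℓ = ℓ * ℓ := by
    rcases Nat.eq_zero_or_pos ℓ with h0 | h0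
    · subst h0; simp [hσdef]
    · have h1 : ℓ * (ℓ - 1) + ℓ = ℓ * ℓ := by
        have h2 : ℓ - 1 + 1 = ℓ := by omega
        calc ℓ * (ℓ-1) + ℓ = ℓ * (ℓ - 1 + 1) := by ring
          _ = ℓ * ℓ := by rw [h2]
      omega
  have hcast : ((ℓ : ℤ) * ((ℓ : ℤ) + 1)) / 2 = (σ : ℤ) + (ℓ : ℤ) := by
    have h2 : ((2 * σ + ℓ : ℕ) : ℤ) = ((ℓ * ℓ : ℕ) : ℤ) := by exact_mod_cast hσℓ
    push_cast at h2
    have h3 : (ℓ : ℤ) * ((ℓ:ℤ) + 1) = ((σ:ℤ) + ℓ) * 2 := by nlinarith [h2]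
    rw [h3]
    omega
  have hml : ℓ + 1 ≤ m := by omega
  -- products facts
  have hp1 : ℓ * d + ℓ * k1 + ℓ = ℓ * m := by
    have hmeq : m = d + k1 + 1 := by omega
    rw [hmeq]; ring
  have hp2 : ℓ * (m - 1) + ℓ = ℓ * m := by
    have hmeq : m - 1 + 1 = m := by omega
    calc ℓ * (m-1) + ℓ = ℓ * (m - 1 + 1) := by ring
      _ = ℓ * m := by rw [hmeq]
  rw [hcast]
  constructor
  · rintro ⟨O, hpos, habove, hsum⟩
    have hval : (O c1).val = d := by omega
    set W := S.image (fun c => (O c : Fin m).val) with hWdef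
    have hinjval : Function.Injective (fun c => (O c : Fin m).val) := by
      intro a b hab
      exact O.injective (Fin.val_injective hab)
    have hWcard : W.card = ℓ := by
      rw [hWdef, Finset.card_image_of_injective _ hinjval, hS]
    have hWsub : W ⊆ range d := by
      intro w hw
      obtain ⟨c, hc, rfl⟩ := Finset.mem_image.mp hw
      rw [mem_range, ← hval]
      exact habove c hc
    have hWlt : ∀ w ∈ W, w < d := fun w hw => mem_range.mp (hWsub hw)
    have hsumW : bordaSum O S = ∑ w ∈ W, (m - 1 - w) := by
      rw [hWdef, Finset.sum_image (fun a _ b _ h => hinjval h)]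
      rfl
    have hpair : ∑ w ∈ W, (m - 1 - w) + ∑ w ∈ W, w = ℓ * (m - 1) := by
      rw [← Finset.sum_add_distrib]
      have h4 : ∀ w ∈ W, (m - 1 - w) + w = m - 1 := by
        intro w hw; have := hWlt w hw; omega
      rw [Finset.sum_congr rfl h4, Finset.sum_const, smul_eq_mul, hWcard]
    have hlow := sum_range_card_le W
    rw [hWcard, ← hσdef] at hlow
    have hup := sum_le_of_subset_range hWsub
    rw [hWcard, ← hσdef] at hup
    have hBlow : ℓ * k1 + σ + ℓ ≤ bordaSum O S := by
      rw [hsumW]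
      linarith [hpair, hup, hp1, hp2]
    have hBhigh : bordaSum O S + σ + ℓ ≤ ℓ * m := by
      rw [hsumW]
      linarith [hpair, hlow, hp2]
    have c1' : ((ℓ * k1 + σ + ℓ : ℕ) : ℤ) ≤ ((bordaSum O S : ℕ) : ℤ) := Nat.cast_le.mpr hBlow
    have c2' : ((bordaSum O S + σ + ℓ : ℕ) : ℤ) ≤ ((ℓ * m : ℕ) : ℤ) := Nat.cast_le.mpr hBhigh
    push_cast at c1' c2'
    constructor
    · linarith [hsum, c1']
    · linarith [hsum, c2']
  · rintro ⟨hv1, hv2⟩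
    have hv0 : 0 ≤ v := by
      have hnn : (0:ℤ) ≤ (ℓ:ℤ) * (k1:ℤ) + ((σ:ℤ) + (ℓ:ℤ)) := by positivity
      linarith
    set vn := v.toNat with hvndef
    have hvn : (vn : ℤ) = v := Int.toNat_of_nonneg hv0
    have hLo : ℓ * k1 + σ + ℓ ≤ vn := by
      have h5 : ((ℓ * k1 + σ + ℓ : ℕ) : ℤ) ≤ (vn : ℤ) := by push_cast; rw [hvn]; linarith
      exact_mod_cast h5
    have hHi : vn + σ + ℓ ≤ ℓ * m := by
      have h5 : ((vn : ℕ) : ℤ) + σ + ℓ ≤ ((ℓ * m : ℕ) : ℤ) := by push_cast; rw [hvn]; linarith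
      exact_mod_cast h5
    set e := d - ℓ with hedef
    have hle : ℓ + e = d := by omega
    have hpk : ℓ * (k1 + 1) = ℓ * k1 + ℓ := by ring
    have hsmax : ∑ i ∈ range ℓ, (e + i) = ℓ * e + σ := by
      rw [Finset.sum_add_distrib, Finset.sum_const, smul_eq_mul, card_range, ← hσdef]
    have hp3 : ℓ * m = ℓ * k1 + ℓ + ℓ * ℓ + ℓ * e := by
      have hmeq : m = k1 + 1 + ℓ + e := by omega
      rw [hmeq]; ring
    set s := vn - ℓ * (k1 + 1) with hsdef
    have hks : ℓ * (k1 + 1) + σ ≤ vn := by rw [hpk]; linarith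
    have hs1 : σ ≤ s := by
      rw [hsdef]; omega
    have hs2 : s ≤ ∑ i ∈ range ℓ, (e + i) := by
      rw [hsmax, hsdef]
      have h6 : vn ≤ ℓ * e + σ + ℓ * (k1 + 1) := by rw [hpk]; linarith [hHi, hp3, hσℓ]
      omega
    obtain ⟨T, hTsub, hTcard, hTsum⟩ := exists_subset_sum e ℓ s hs1 hs2
    rw [hle] at hTsub
    have hTlt : ∀ t ∈ T, t < d := fun t ht => mem_range.mp (hTsub ht)
    obtain ⟨g, hgval⟩ : ∃ g : ℕ → Fin m, ∀ t, (g t).val = d - 1 - t :=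
      ⟨fun t => ⟨d - 1 - t, by omega⟩, fun t => rfl⟩
    have hgInj : ∀ t1 ∈ T, ∀ t2 ∈ T, g t1 = g t2 → t1 = t2 := by
      intro t1 h1 t2 h2 hg
      have := hTlt t1 h1; have := hTlt t2 h2
      have h7 : d - 1 - t1 = d - 1 - t2 := by
        rw [← hgval t1, ← hgval t2, hg]
      exact aux1 ‹t1 < d› ‹t2 < d› h7
    set B0 := T.image g with hB0def
    have hB0card : B0.card = ℓ := by
      rw [hB0def, Finset.card_image_of_injOn hgInj, hTcard]
    obtain ⟨c1t, hc1tval⟩ : ∃ c1t : Fin m, (c1t : Fin m).val = d := ⟨⟨d, hd⟩, rfl⟩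
    have hB0lt : ∀ y ∈ B0, (y : Fin m).val < d := by
      intro y hy
      obtain ⟨t, ht, rfl⟩ := Finset.mem_image.mp hy
      rw [hgval]
      exact aux2 (hTlt t ht)
    have hc1tB0 : c1t ∉ B0 := by
      intro hmem
      have h10 := hB0lt c1t hmem
      rw [hc1tval] at h10
      exact absurd h10 (lt_irrefl d)
    set A := insert c1 S with hAdef
    set B := insert c1t B0 with hBdef
    have eS : {x // x ∈ S} ≃ {y // y ∈ B0} := Fintype.equivOfCardEq (by
      rw [Fintype.card_coe, Fintype.card_coe, hS, hB0card])
    set eIn : {x // x ∈ A} ≃ {y // y ∈ B} :=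
      (Finset.subtypeInsertEquivOption hc1S).trans
        ((eS.optionCongr).trans (Finset.subtypeInsertEquivOption hc1tB0).symm) with heIn
    obtain ⟨O, hOa⟩ := extend_equiv A B (by rw [Fintype.card_fin]) eIn
    have heInc1 : (eIn ⟨c1, Finset.mem_insert_self c1 S⟩ : Fin m) = c1t := by
      simp [heIn, Finset.subtypeInsertEquivOption]
    have heInS : ∀ (c : C) (hc : c ∈ S),
        (eIn ⟨c, Finset.mem_insert_of_mem hc⟩ : Fin m) = (eS ⟨c, hc⟩ : Fin m) := by
      intro c hc
      have hne : (c : C) ≠ c1 := fun h => hc1S (h ▸ hc)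
      simp [heIn, Finset.subtypeInsertEquivOption, hne]
    have hOc1 : O c1 = c1t := by
      rw [hOa c1 (Finset.mem_insert_self c1 S), heInc1]
    have hOS : ∀ (c : C) (hc : c ∈ S), O c = (eS ⟨c, hc⟩ : Fin m) := by
      intro c hc
      rw [hOa c (Finset.mem_insert_of_mem hc), heInS c hc]
    have hOSB0 : ∀ c ∈ S, O c ∈ B0 := by
      intro c hc
      rw [hOS c hc]
      exact (eS ⟨c, hc⟩).2
    refine ⟨O, ?_, ?_, ?_⟩
    · rw [hOc1, hc1tval, hddef]
      exact aux3 hm hk1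
    · intro c hc
      have h8 := hB0lt _ (hOSB0 c hc)
      have h9 : (O c).val < (O c1).val := by rw [hOc1, hc1tval]; exact h8
      exact h9
    · have himg : S.image (fun c => O c) = B0 := by
        apply Finset.eq_of_subset_of_card_le
        · intro y hy
          obtain ⟨c, hc, rfl⟩ := Finset.mem_image.mp hy
          exact hOSB0 c hc
        · rw [hB0card, Finset.card_image_of_injective _ O.injective, hS]
      have hbs : bordaSum O S = ∑ y ∈ B0, (m - 1 - (y : Fin m).val) := by
        rw [← himg, Finset.sum_image (fun a _ b _ h => O.injective h)]
        rfl
      have hbs2 : ∑ y ∈ B0, (m - 1 - (y : Fin m).val) = ∑ t ∈ T, (k1 + 1 + t) := by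
        rw [hB0def, Finset.sum_image hgInj]
        apply Finset.sum_congr rfl
        intro t ht
        rw [hgval, hddef]
        exact aux4 hm hk1 (hTlt t ht)
      have hbs3 : ∑ t ∈ T, (k1 + 1 + t) = ℓ * (k1 + 1) + s := by
        rw [Finset.sum_add_distrib, Finset.sum_const, smul_eq_mul, hTcard, hTsum]
      have hfin : bordaSum O S = vn := by
        rw [hbs, hbs2, hbs3, hsdef]
        exact Nat.add_sub_cancel' (le_trans (Nat.le_add_right _ σ) hks)
      rw [hfin, hvn]



end Stmt5
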